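/- Assume condition (*). Let v ∈ V \ {0} and let U be the eigenspace of Λ_V with eigenvalue d(v). Given any subsequence (α) of the indices such that B_{α+1} converges to g e^{Λ} g^{-1} for some g ∈ K, there is a further subsequence (β) along which [ρ(A_β) v] converges in the projective space ℙ(V) to a point [w] with ρ(g)^{-1} w ∈ U. -/

import Mathlib

open Filter Topology NormedSpace
open scoped LinearAlgebra.Projectivization

set_option linter.unusedSectionVars false

noncomputable section

namespace CSW

variable {E : Type*} [NormedAddCommGroup E] [InnerProductSpace ℂ E] [FiniteDimensional ℂ E]
variable {V : Type*} [NormedAddCommGroup V] [InnerProductSpace ℂ V] [FiniteDimensional ℂ V]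

/-- The exponential `e^T` of a bounded operator, as a unit (invertible element) of the algebra
of continuous linear endomorphisms. -/
def expUnit (T : E →L[ℂ] E) : (E →L[ℂ] E)ˣ where
  val := exp T
  inv := exp (-T)
  val_inv := by
    letI : NormedAlgebra ℚ (E →L[ℂ] E) := NormedAlgebra.restrictScalars ℚ ℂ _
    rw [← exp_add_of_commute (Commute.refl T).neg_right, add_neg_cancel, exp_zero]
  inv_val := by
    letI : NormedAlgebra ℚ (E →L[ℂ] E) := NormedAlgebra.restrictScalars ℚ ℂ _
    rw [← exp_add_of_commute (Commute.refl T).neg_left, neg_add_cancel, exp_zero]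

/-- `Bseq A i` is `B_i = A_i A_{i-1}⁻¹` (with the junk value `B_0 = 1`). -/
def Bseq (A : ℕ → (E →L[ℂ] E)ˣ) (i : ℕ) : (E →L[ℂ] E)ˣ := A i * (A (i - 1))⁻¹

/-- Condition (*): for any subsequence, after passing to a further subsequence, `B_{α+1}` and
`B_{α+2}` both converge (in operator norm) to `g e^Λ g⁻¹` for some unitary `g`. -/
def CondStar (A : ℕ → (E →L[ℂ] E)ˣ) (Λ : E →L[ℂ] E) : Prop :=
  ∀ φ : ℕ → ℕ, StrictMono φ → ∃ ψ : ℕ → ℕ, StrictMono ψ ∧ ∃ g : (E →L[ℂ] E)ˣ,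
    (g : E →L[ℂ] E) ∈ unitary (E →L[ℂ] E) ∧
    Tendsto (fun j => (Bseq A (φ (ψ j) + 1) : E →L[ℂ] E)) atTop
      (𝓝 ((g * expUnit Λ * g⁻¹ : (E →L[ℂ] E)ˣ) : E →L[ℂ] E)) ∧
    Tendsto (fun j => (Bseq A (φ (ψ j) + 2) : E →L[ℂ] E)) atTop
      (𝓝 ((g * expUnit Λ * g⁻¹ : (E →L[ℂ] E)ˣ) : E →L[ℂ] E))

/-- Condition (*)' for a given gauge sequence `g`: `g 0 = 1`, each `g i` is unitary,
`B_i g_i e^{-Λ} g_i⁻¹ → Id` and `g_{i-1}⁻¹ g_i → Id`. -/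
def CondStar' (A : ℕ → (E →L[ℂ] E)ˣ) (Λ : E →L[ℂ] E) (g : ℕ → (E →L[ℂ] E)ˣ) : Prop :=
  g 0 = 1 ∧ (∀ i, (g i : E →L[ℂ] E) ∈ unitary (E →L[ℂ] E)) ∧
  Tendsto (fun i => ((Bseq A i * g i * expUnit (-Λ) * (g i)⁻¹ : (E →L[ℂ] E)ˣ) : E →L[ℂ] E))
    atTop (𝓝 1) ∧
  Tendsto (fun i => (((g (i - 1))⁻¹ * g i : (E →L[ℂ] E)ˣ) : E →L[ℂ] E)) atTop (𝓝 1)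

/-- Membership in `G_Λ = {g ∈ G : g Λ g⁻¹ = Λ}`. -/
def InGΛ (Λ : E →L[ℂ] E) (h : (E →L[ℂ] E)ˣ) : Prop :=
  (h : E →L[ℂ] E) * Λ = Λ * (h : E →L[ℂ] E)

/-- Membership in `K_Λ = {g ∈ K : g Λ g⁻¹ = Λ}`. -/
def InKΛ (Λ : E →L[ℂ] E) (h : (E →L[ℂ] E)ˣ) : Prop :=
  (h : E →L[ℂ] E) ∈ unitary (E →L[ℂ] E) ∧ InGΛ Λ h

/-- A (continuous, finite-dimensional) complex representation `ρ` of `G = GL(E)` on a Hermitian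
vector space `V`, mapping unitary elements to unitary elements, together with a self-adjoint
operator `Λ_V` on `V` compatible with `Λ` via `ρ(e^{tΛ}) = e^{tΛ_V}`. -/
structure Rep (Λ : E →L[ℂ] E) (V : Type*) [NormedAddCommGroup V] [InnerProductSpace ℂ V]
    [FiniteDimensional ℂ V] where
  ρ : (E →L[ℂ] E)ˣ →* (V →L[ℂ] V)ˣ
  continuous_ρ : Continuous fun u : (E →L[ℂ] E)ˣ => ((ρ u : (V →L[ℂ] V)ˣ) : V →L[ℂ] V)
  unitary_ρ : ∀ u : (E →L[ℂ] E)ˣ, (u : E →L[ℂ] E) ∈ unitary (E →L[ℂ] E) →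
    ((ρ u : (V →L[ℂ] V)ˣ) : V →L[ℂ] V) ∈ unitary (V →L[ℂ] V)
  ΛV : V →L[ℂ] V
  selfAdjoint_ΛV : IsSelfAdjoint ΛV
  exp_eq : ∀ t : ℝ, ((ρ (expUnit ((t : ℂ) • Λ)) : (V →L[ℂ] V)ˣ) : V →L[ℂ] V)
      = exp ((t : ℂ) • ΛV)

variable {Λ : E →L[ℂ] E}

theorem unit_apply_ne_zero (u : (V →L[ℂ] V)ˣ) {v : V} (hv : v ≠ 0) :
    (u : V →L[ℂ] V) v ≠ 0 := by
  intro h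
  apply hv
  have h2 : (((u⁻¹ : (V →L[ℂ] V)ˣ) : V →L[ℂ] V) * (u : V →L[ℂ] V)) v = 0 := by
    rw [ContinuousLinearMap.mul_apply, h, map_zero]
  rwa [Units.inv_mul, ContinuousLinearMap.one_apply] at h2

theorem unit_apply_injective (u : (V →L[ℂ] V)ˣ) :
    Function.Injective ((u : V →L[ℂ] V) : V → V) := by
  intro a b hab
  have h2 := congrArg (fun x => ((u⁻¹ : (V →L[ℂ] V)ˣ) : V →L[ℂ] V) x) hab
  simpa [← ContinuousLinearMap.mul_apply, Units.inv_mul] using h2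

/-- `f_i(v) = log ‖ρ(A_i) v‖`. -/
def fseq (R : Rep Λ V) (A : ℕ → (E →L[ℂ] E)ˣ) (v : V) (i : ℕ) : ℝ :=
  Real.log ‖(R.ρ (A i) : V →L[ℂ] V) v‖

/-- The quotient topology on the projectivization of a topological vector space. -/
instance : TopologicalSpace (ℙ ℂ V) := instTopologicalSpaceQuotient

/-- The natural action of `GL(E)` on `ℙ(V)` through the representation `R`. -/
def pact (R : Rep Λ V) (u : (E →L[ℂ] E)ˣ) : ℙ ℂ V → ℙ ℂ V :=
  Projectivization.map (((R.ρ u : (V →L[ℂ] V)ˣ) : V →L[ℂ] V) : V →ₗ[ℂ] V)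
    (unit_apply_injective _)

/-- The limit set `Lim(v) ⊆ ℙ(V)`: the union of the `ρ(K_Λ)`-orbits of all subsequential limits
of `[ρ(g_i⁻¹ A_i) v]`. -/
def LimSet (R : Rep Λ V) (A g : ℕ → (E →L[ℂ] E)ˣ) {v : V} (hv : v ≠ 0) :
    Set (ℙ ℂ V) :=
  {y | ∃ (w : V) (hw : w ≠ 0) (k : (E →L[ℂ] E)ˣ), InKΛ Λ k ∧
    y = Projectivization.mk ℂ ((R.ρ k : V →L[ℂ] V) w) (unit_apply_ne_zero _ hw) ∧
    ∃ φ : ℕ → ℕ, StrictMono φ ∧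
      Tendsto (fun j => Projectivization.mk ℂ
          ((R.ρ ((g (φ j))⁻¹ * A (φ j)) : V →L[ℂ] V) v) (unit_apply_ne_zero _ hv))
        atTop (𝓝 (Projectivization.mk ℂ w hw))}

/-- The eigenspace `U` of `Λ` with (real) eigenvalue `c`. -/
def eigU (Λ : E →L[ℂ] E) (c : ℝ) : Submodule ℂ E :=
  Module.End.eigenspace (Λ : E →ₗ[ℂ] E) (c : ℂ)

/-- The weight `d(v) = lim_i i⁻¹ log ‖A_i v‖` for the standard representation of `GL(E)` on `E`
(a junk value if the limit does not exist). -/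
def dstd (A : ℕ → (E →L[ℂ] E)ˣ) (v : E) : ℝ :=
  limUnder atTop fun i : ℕ => Real.log ‖(A i : E →L[ℂ] E) v‖ / i

/-- `p_s = Σ_{k ≤ s} n_k` where `n_k = dim U_k`. -/
def psum (Λ : E →L[ℂ] E) {r : ℕ} (lam : Fin r → ℝ) (s : Fin r) : ℕ :=
  ∑ k ∈ Finset.univ.filter (fun k => k ≤ s), Module.finrank ℂ (eigU Λ (lam k))

/-- `q_s = Σ_{k ≥ s} n_k` where `n_k = dim U_k`. -/
def qsum (Λ : E →L[ℂ] E) {r : ℕ} (lam : Fin r → ℝ) (s : Fin r) : ℕ :=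
  ∑ k ∈ Finset.univ.filter (fun k => s ≤ k), Module.finrank ℂ (eigU Λ (lam k))

/-- A model for the `p`-th exterior power of `E`, with its induced Hermitian metric
(determined by `⟨x₁∧⋯∧x_p, y₁∧⋯∧y_p⟩ = det(⟨x_i, y_j⟩)`), the induced representation of `GL(E)`,
and the induced self-adjoint operator (the derivation extension of `Λ`, pinned down by
`Rep.exp_eq` and equivariance of `wedge`). -/
structure ExtPower (Λ : E →L[ℂ] E) (p : ℕ) where
  P : Type
  [normed : NormedAddCommGroup P]
  [ips : InnerProductSpace ℂ P]
  [fd : FiniteDimensional ℂ P]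
  R : Rep Λ P
  wedge : E [⋀^Fin p]→ₗ[ℂ] P
  wedge_map : ∀ (u : (E →L[ℂ] E)ˣ) (x : Fin p → E),
    ((R.ρ u : (P →L[ℂ] P)ˣ) : P →L[ℂ] P) (wedge x) = wedge fun j => (u : E →L[ℂ] E) (x j)
  wedge_inner : ∀ x y : Fin p → E,
    (inner ℂ (wedge x) (wedge y) : ℂ) = (Matrix.of fun i j : Fin p => (inner ℂ (x i) (y j) : ℂ)).det
  wedge_span : Submodule.span ℂ (Set.range wedge) = ⊤

attribute [instance] ExtPower.normed ExtPower.ips ExtPower.fd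

/-- A bundle of the choices made in Section 2 of the paper: a gauge sequence `g` as in (*)',
the filtration `V_s` (with `V_{r+1} = 0`), complements `W_s` with `V_s = W_s ⊕ V_{s+1}` and
`Lim(W_s) = {[⋀^{n_s} U_s]}`, and identifications `C_i → Id` carrying `g_i⁻¹ A_i · W_s`
onto `U_s`. -/
structure Choices (A : ℕ → (E →L[ℂ] E)ˣ) (Λ : E →L[ℂ] E) (r : ℕ) (lam : Fin r → ℝ)
    (EP : ∀ p : ℕ, ExtPower Λ p) where
  g : ℕ → (E →L[ℂ] E)ˣ
  hg : CondStar' A Λ g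
  Vsub : Fin (r + 1) → Submodule ℂ E
  hVsub : ∀ s : Fin r, (Vsub s.castSucc : Set E) = {v : E | v = 0 ∨ dstd A v ≤ lam s}
  hVlast : Vsub (Fin.last r) = ⊥
  W : Fin r → Submodule ℂ E
  hW_sup : ∀ s : Fin r, W s ⊔ Vsub s.succ = Vsub s.castSucc
  hW_inf : ∀ s : Fin r, W s ⊓ Vsub s.succ = ⊥
  hW_lim : ∀ s : Fin r, ∀ b : Fin (Module.finrank ℂ (eigU Λ (lam s))) → E,
    LinearIndependent ℂ b → Submodule.span ℂ (Set.range b) = W s →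
    ∀ c : Fin (Module.finrank ℂ (eigU Λ (lam s))) → E,
    LinearIndependent ℂ c → Submodule.span ℂ (Set.range c) = eigU Λ (lam s) →
    ∃ (hb : (EP (Module.finrank ℂ (eigU Λ (lam s)))).wedge b ≠ 0)
      (hc : (EP (Module.finrank ℂ (eigU Λ (lam s)))).wedge c ≠ 0),
      LimSet (EP (Module.finrank ℂ (eigU Λ (lam s)))).R A g hb
        = {Projectivization.mk ℂ ((EP (Module.finrank ℂ (eigU Λ (lam s)))).wedge c) hc}
  C : ℕ → (E →L[ℂ] E)ˣ
  hC_lim : Tendsto (fun i => (C i : E →L[ℂ] E)) atTop (𝓝 1)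
  hC_map : ∀ (s : Fin r) (i : ℕ),
    Submodule.map ((((C i * (g i)⁻¹ * A i : (E →L[ℂ] E)ˣ) : E →L[ℂ] E) : E →ₗ[ℂ] E)) (W s)
      = eigU Λ (lam s)

/-- A model for the symmetric algebra `Sym(E*) = ⊕_k Sym^k(E*)` on the dual of `E`:
each graded piece is a Hermitian space carrying a compatible representation of `GL(E)`
(induced by the dual of the standard representation), `gen` identifies the degree-one piece
with `E*` equivariantly, and the product is bilinear, equivariant, has no zero divisors, and
together with the generators spans each graded piece. -/
structure SymModel (Λ : E →L[ℂ] E) where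
  P : ℕ → Type
  [normed : ∀ k, NormedAddCommGroup (P k)]
  [ips : ∀ k, InnerProductSpace ℂ (P k)]
  [fd : ∀ k, FiniteDimensional ℂ (P k)]
  R : ∀ k, Rep Λ (P k)
  mul : ∀ {k l : ℕ}, P k →ₗ[ℂ] P l →ₗ[ℂ] P (k + l)
  mul_equivariant : ∀ {k l : ℕ} (u : (E →L[ℂ] E)ˣ) (x : P k) (y : P l),
    (((R (k + l)).ρ u : (P (k + l) →L[ℂ] P (k + l))ˣ) : P (k + l) →L[ℂ] P (k + l)) (mul x y)
      = mul ((((R k).ρ u : (P k →L[ℂ] P k)ˣ) : P k →L[ℂ] P k) x)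
            ((((R l).ρ u : (P l →L[ℂ] P l)ˣ) : P l →L[ℂ] P l) y)
  mul_ne_zero : ∀ {k l : ℕ} {x : P k} {y : P l}, x ≠ 0 → y ≠ 0 → mul x y ≠ 0
  gen : (E →L[ℂ] ℂ) ≃ₗ[ℂ] P 1
  gen_equivariant : ∀ (u : (E →L[ℂ] E)ˣ) (l : E →L[ℂ] ℂ),
    (((R 1).ρ u : (P 1 →L[ℂ] P 1)ˣ) : P 1 →L[ℂ] P 1) (gen l)
      = gen (l.comp (((u⁻¹ : (E →L[ℂ] E)ˣ) : E →L[ℂ] E)))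
  span_gen_mul : ∀ k : ℕ, Submodule.span ℂ
      {z : P (k + 1) | ∃ (x : P k) (l : E →L[ℂ] ℂ), z = mul x (gen l)} = ⊤

attribute [instance] SymModel.normed SymModel.ips SymModel.fd

/-- Auxiliary: the increment sequence `a i = f_{i+1} - f_i`. -/
def aseq (R : Rep Λ V) (A : ℕ → (E →L[ℂ] E)ˣ) (v : V) (i : ℕ) : ℝ :=
  fseq R A v (i + 1) - fseq R A v i

/-- Auxiliary: the vector sequence `x i = ρ(A_i) v`. -/
def xseq (R : Rep Λ V) (A : ℕ → (E →L[ℂ] E)ˣ) (v : V) (i : ℕ) : V :=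
  (R.ρ (A i) : V →L[ℂ] V) v

/-- Auxiliary: the normalized vector sequence. -/
def useq (R : Rep Λ V) (A : ℕ → (E →L[ℂ] E)ˣ) (v : V) (i : ℕ) : V :=
  ((‖xseq R A v i‖ : ℂ))⁻¹ • xseq R A v i

theorem xseq_ne_zero (R : Rep Λ V) (A : ℕ → (E →L[ℂ] E)ˣ) {v : V} (hv : v ≠ 0) (i : ℕ) :
    xseq R A v i ≠ 0 := unit_apply_ne_zero _ hv

theorem norm_xseq_pos (R : Rep Λ V) (A : ℕ → (E →L[ℂ] E)ˣ) {v : V} (hv : v ≠ 0) (i : ℕ) :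
    0 < ‖xseq R A v i‖ := norm_pos_iff.2 (xseq_ne_zero R A hv i)

theorem norm_useq (R : Rep Λ V) (A : ℕ → (E →L[ℂ] E)ˣ) {v : V} (hv : v ≠ 0) (i : ℕ) :
    ‖useq R A v i‖ = 1 := by
  have h := norm_xseq_pos R A hv i
  rw [useq, norm_smul, norm_inv, Complex.norm_real, Real.norm_eq_abs,
    abs_of_pos h, inv_mul_cancel₀ h.ne']

theorem Bseq_mul (A : ℕ → (E →L[ℂ] E)ˣ) (i : ℕ) : Bseq A (i + 1) * A i = A (i + 1) := by
  rw [Bseq, Nat.add_sub_cancel, mul_assoc, inv_mul_cancel, mul_one]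

theorem xseq_succ (R : Rep Λ V) (A : ℕ → (E →L[ℂ] E)ˣ) (v : V) (i : ℕ) :
    xseq R A v (i + 1) = (R.ρ (Bseq A (i + 1)) : V →L[ℂ] V) (xseq R A v i) := by
  rw [xseq, xseq, ← Bseq_mul A i, map_mul, Units.val_mul, ContinuousLinearMap.mul_apply]

theorem aseq_eq_log (R : Rep Λ V) (A : ℕ → (E →L[ℂ] E)ˣ) {v : V} (hv : v ≠ 0) (i : ℕ) :
    aseq R A v i = Real.log (‖xseq R A v (i + 1)‖ / ‖xseq R A v i‖) := by
  rw [aseq, fseq, fseq, Real.log_div (norm_xseq_pos R A hv (i + 1)).ne'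
    (norm_xseq_pos R A hv i).ne']
  rfl
theorem tendsto_units_of_tendsto_val {A' : Type*} [NormedRing A'] [CompleteSpace A']
    {u : ℕ → A'ˣ} {l : A'ˣ} (h : Tendsto (fun j => (u j : A')) atTop (𝓝 (l : A'))) :
    Tendsto u atTop (𝓝 l) :=
  (Units.isOpenEmbedding_val.toIsEmbedding.tendsto_nhds_iff).2 h

/-- If the values of `B j` converge to the value of a unit `H`, then `ρ(B j)` converges to
`ρ(H)` (as continuous linear maps). -/
theorem rho_tendsto (R : Rep Λ V) {B : ℕ → (E →L[ℂ] E)ˣ} {H : (E →L[ℂ] E)ˣ}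
    (h : Tendsto (fun j => (B j : E →L[ℂ] E)) atTop (𝓝 (H : E →L[ℂ] E))) :
    Tendsto (fun j => ((R.ρ (B j) : (V →L[ℂ] V)ˣ) : V →L[ℂ] V)) atTop
      (𝓝 ((R.ρ H : (V →L[ℂ] V)ˣ) : V →L[ℂ] V)) := by
  have h1 : Tendsto B atTop (𝓝 H) := tendsto_units_of_tendsto_val h
  exact (R.continuous_ρ.tendsto H).comp h1

/-- Applying converging operators to converging vectors. -/
theorem tendsto_apply_of_tendsto {T : ℕ → V →L[ℂ] V} {T₀ : V →L[ℂ] V} {z : ℕ → V} {z₀ : V}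
    (hT : Tendsto T atTop (𝓝 T₀)) (hz : Tendsto z atTop (𝓝 z₀)) :
    Tendsto (fun j => T j (z j)) atTop (𝓝 (T₀ z₀)) := by
  have := (isBoundedBilinearMap_apply (𝕜 := ℂ) (E := V) (F := V)).continuous
  exact (this.tendsto (T₀, z₀)).comp (hT.prodMk_nhds hz)

/-- The exponential of an operator acts on eigenvectors by `exp` of the eigenvalue. -/
theorem exp_apply_eigenvector {T : V →L[ℂ] V} {z : V} {c : ℂ} (h : T z = c • z) :
    exp T z = Complex.exp c • z := by
  have hpow : ∀ n : ℕ, (T ^ n) z = c ^ n • z := by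
    intro n
    induction n with
    | zero => simp
    | succ n ih =>
      have h1 : (T ^ (n + 1)) z = T ((T ^ n) z) := by rw [pow_succ']; rfl
      rw [h1, ih, map_smul, h, smul_smul, ← pow_succ]
  have hsum : Summable fun n : ℕ => ((n.factorial : ℂ))⁻¹ • T ^ n := expSeries_summable' (𝕂 := ℂ) T
  have := (ContinuousLinearMap.apply ℂ V z).map_tsum hsum
  rw [exp_eq_tsum (𝕂 := ℂ)]
  simp only [ContinuousLinearMap.apply_apply] at this
  rw [this]
  have h2 : ∀ n : ℕ, (((n.factorial : ℂ))⁻¹ • T ^ n) z = (((n.factorial : ℂ))⁻¹ * c ^ n) • z := by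
    intro n
    rw [ContinuousLinearMap.smul_apply, hpow, smul_smul]
  simp only [h2]
  have hsum2 : Summable fun n : ℕ => ((n.factorial : ℂ))⁻¹ * c ^ n := by
    simpa using (expSeries_summable' (𝕂 := ℂ) c)
  rw [hsum2.tsum_smul_const]
  congr 1
  rw [Complex.exp_eq_exp_ℂ, exp_eq_tsum (𝕂 := ℂ)]
  simp [smul_eq_mul]

/-- `exp ℂ ΛV` is self-adjoint. -/
theorem isSelfAdjoint_exp_LambdaV (R : Rep Λ V) : IsSelfAdjoint (exp R.ΛV) := by
  have := R.selfAdjoint_ΛV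
  rw [IsSelfAdjoint] at this ⊢
  rw [star_exp, this]
theorem val_inv_eq_star (R : Rep Λ V) {h : (E →L[ℂ] E)ˣ}
    (hu : (h : E →L[ℂ] E) ∈ unitary (E →L[ℂ] E)) :
    (((R.ρ h)⁻¹ : (V →L[ℂ] V)ˣ) : V →L[ℂ] V) = star ((R.ρ h : (V →L[ℂ] V)ˣ) : V →L[ℂ] V) := by
  have hU := R.unitary_ρ h hu
  have h2 : ((R.ρ h : (V →L[ℂ] V)ˣ) : V →L[ℂ] V) *
      star ((R.ρ h : (V →L[ℂ] V)ˣ) : V →L[ℂ] V) = 1 := (Unitary.mem_iff.1 hU).2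
  calc (((R.ρ h)⁻¹ : (V →L[ℂ] V)ˣ) : V →L[ℂ] V)
      = (((R.ρ h)⁻¹ : (V →L[ℂ] V)ˣ) : V →L[ℂ] V) * ((R.ρ h : (V →L[ℂ] V)ˣ) *
        star ((R.ρ h : (V →L[ℂ] V)ˣ) : V →L[ℂ] V)) := by rw [h2, mul_one]
    _ = star ((R.ρ h : (V →L[ℂ] V)ˣ) : V →L[ℂ] V) := by
        rw [← mul_assoc, ← Units.val_mul, inv_mul_cancel, Units.val_one, one_mul]

theorem val_inv_unitary (R : Rep Λ V) {h : (E →L[ℂ] E)ˣ}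
    (hu : (h : E →L[ℂ] E) ∈ unitary (E →L[ℂ] E)) :
    (((R.ρ h)⁻¹ : (V →L[ℂ] V)ˣ) : V →L[ℂ] V) ∈ unitary (V →L[ℂ] V) := by
  rw [val_inv_eq_star R hu]
  exact Unitary.star_mem (R.unitary_ρ h hu)

theorem rho_expUnit_val (R : Rep Λ V) :
    ((R.ρ (expUnit Λ) : (V →L[ℂ] V)ˣ) : V →L[ℂ] V) = exp R.ΛV := by
  have h := R.exp_eq 1
  simpa using h

theorem conj_exp_apply (R : Rep Λ V) (h : (E →L[ℂ] E)ˣ) (z : V) :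
    ((R.ρ (h * expUnit Λ * h⁻¹) : (V →L[ℂ] V)ˣ) : V →L[ℂ] V) z
      = (R.ρ h : V →L[ℂ] V) (exp R.ΛV ((((R.ρ h)⁻¹ : (V →L[ℂ] V)ˣ) : V →L[ℂ] V) z)) := by
  rw [map_mul, map_mul, map_inv, Units.val_mul, Units.val_mul,
    ContinuousLinearMap.mul_apply, ContinuousLinearMap.mul_apply, rho_expUnit_val]

theorem inv_apply_apply (R : Rep Λ V) (h : (E →L[ℂ] E)ˣ) (z : V) :
    (((R.ρ h)⁻¹ : (V →L[ℂ] V)ˣ) : V →L[ℂ] V) ((R.ρ h : V →L[ℂ] V) z) = z := by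
  rw [← ContinuousLinearMap.mul_apply, ← Units.val_mul, inv_mul_cancel, Units.val_one,
    ContinuousLinearMap.one_apply]
theorem scen_limits (R : Rep Λ V) (A : ℕ → (E →L[ℂ] E)ˣ) {v : V} (hv : v ≠ 0)
    {t : ℕ → ℕ} {h : (E →L[ℂ] E)ˣ}
    (hu : (h : E →L[ℂ] E) ∈ unitary (E →L[ℂ] E))
    (hB1 : Tendsto (fun j => (Bseq A (t j + 1) : E →L[ℂ] E)) atTop
      (𝓝 ((h * expUnit Λ * h⁻¹ : (E →L[ℂ] E)ˣ) : E →L[ℂ] E)))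
    (hB2 : Tendsto (fun j => (Bseq A (t j + 2) : E →L[ℂ] E)) atTop
      (𝓝 ((h * expUnit Λ * h⁻¹ : (E →L[ℂ] E)ˣ) : E →L[ℂ] E)))
    {w : V} (hw : w ≠ 0)
    (huw : Tendsto (fun j => useq R A v (t j)) atTop (𝓝 w)) :
    Tendsto (fun j => aseq R A v (t j)) atTop
        (𝓝 (Real.log ‖exp R.ΛV ((((R.ρ h)⁻¹ : (V →L[ℂ] V)ˣ) : V →L[ℂ] V) w)‖)) ∧
      Tendsto (fun j => aseq R A v (t j + 1)) atTop
        (𝓝 (Real.log ‖exp R.ΛV (exp R.ΛV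
              ((((R.ρ h)⁻¹ : (V →L[ℂ] V)ˣ) : V →L[ℂ] V) w))‖
            - Real.log ‖exp R.ΛV ((((R.ρ h)⁻¹ : (V →L[ℂ] V)ˣ) : V →L[ℂ] V) w)‖)) := by
  set S : V →L[ℂ] V := exp R.ΛV with hSdef
  set w' : V := (((R.ρ h)⁻¹ : (V →L[ℂ] V)ˣ) : V →L[ℂ] V) w with hw'def
  have hw'0 : w' ≠ 0 := unit_apply_ne_zero _ hw
  have hSval : ((R.ρ (expUnit Λ) : (V →L[ℂ] V)ˣ) : V →L[ℂ] V) = S := rho_expUnit_val R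
  have hSapp : ∀ z : V, z ≠ 0 → S z ≠ 0 := by
    intro z hz
    rw [← hSval]
    exact unit_apply_ne_zero _ hz
  have hS1 : S w' ≠ 0 := hSapp _ hw'0
  have hS2 : S (S w') ≠ 0 := hSapp _ hS1
  have hT1 := rho_tendsto R hB1
  have hT2 := rho_tendsto R hB2
  set y1 : ℕ → V := fun j => (R.ρ (Bseq A (t j + 1)) : V →L[ℂ] V) (useq R A v (t j)) with hy1def
  have hy1tend : Tendsto y1 atTop (𝓝 ((R.ρ h : V →L[ℂ] V) (S w'))) := by
    have := tendsto_apply_of_tendsto hT1 huw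
    rwa [conj_exp_apply R h w] at this
  set y2 : ℕ → V := fun j => (R.ρ (Bseq A (t j + 2)) : V →L[ℂ] V) (y1 j) with hy2def
  have hy2tend : Tendsto y2 atTop (𝓝 ((R.ρ h : V →L[ℂ] V) (S (S w')))) := by
    have := tendsto_apply_of_tendsto hT2 hy1tend
    rwa [conj_exp_apply R h, inv_apply_apply R h] at this
  have hρhu := R.unitary_ρ h hu
  have hn1 : ‖(R.ρ h : V →L[ℂ] V) (S w')‖ = ‖S w'‖ :=
    ContinuousLinearMap.norm_map_of_mem_unitary hρhu _
  have hn2 : ‖(R.ρ h : V →L[ℂ] V) (S (S w'))‖ = ‖S (S w')‖ :=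
    ContinuousLinearMap.norm_map_of_mem_unitary hρhu _
  -- identify y1, y2 as rescaled xseq's
  have hcy1 : ∀ j, y1 j = ((‖xseq R A v (t j)‖ : ℂ))⁻¹ • xseq R A v (t j + 1) := by
    intro j
    rw [hy1def]
    simp only [useq, map_smul, ← xseq_succ]
  have hcy2 : ∀ j, y2 j = ((‖xseq R A v (t j)‖ : ℂ))⁻¹ • xseq R A v (t j + 2) := by
    intro j
    rw [hy2def]
    simp only [hcy1 j, map_smul]
    congr 1
    exact (xseq_succ R A v (t j + 1)).symm
  have hnorm_c : ∀ j, ‖((‖xseq R A v (t j)‖ : ℂ))⁻¹‖ = ‖xseq R A v (t j)‖⁻¹ := by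
    intro j
    rw [norm_inv, Complex.norm_real, Real.norm_eq_abs, abs_of_pos (norm_xseq_pos R A hv _)]
  have hny1 : ∀ j, ‖y1 j‖ = ‖xseq R A v (t j + 1)‖ / ‖xseq R A v (t j)‖ := by
    intro j
    rw [hcy1 j, norm_smul, hnorm_c j, inv_mul_eq_div]
  have hny2 : ∀ j, ‖y2 j‖ = ‖xseq R A v (t j + 2)‖ / ‖xseq R A v (t j)‖ := by
    intro j
    rw [hcy2 j, norm_smul, hnorm_c j, inv_mul_eq_div]
  have ha1 : ∀ j, aseq R A v (t j) = Real.log ‖y1 j‖ := by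
    intro j
    rw [aseq_eq_log R A hv, hny1 j]
  have ha2 : ∀ j, aseq R A v (t j + 1) = Real.log ‖y2 j‖ - Real.log ‖y1 j‖ := by
    intro j
    rw [aseq_eq_log R A hv, hny1 j, hny2 j, Real.log_div, Real.log_div, Real.log_div]
    · ring
    all_goals exact (norm_xseq_pos R A hv _).ne'
  constructor
  · have hlim : Tendsto (fun j => Real.log ‖y1 j‖) atTop (𝓝 (Real.log ‖S w'‖)) := by
      have := (hy1tend.norm).log (by rw [hn1]; exact norm_ne_zero_iff.2 hS1)
      rwa [hn1] at this
    simpa only [← ha1] using hlim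
  · have hlim2 : Tendsto (fun j => Real.log ‖y2 j‖ - Real.log ‖y1 j‖) atTop
        (𝓝 (Real.log ‖S (S w')‖ - Real.log ‖S w'‖)) := by
      have l2 := (hy2tend.norm).log (by rw [hn2]; exact norm_ne_zero_iff.2 hS2)
      have l1 := (hy1tend.norm).log (by rw [hn1]; exact norm_ne_zero_iff.2 hS1)
      rw [hn2] at l2; rw [hn1] at l1
      exact l2.sub l1
    simpa only [← ha2] using hlim2
theorem expLV_ne_zero (R : Rep Λ V) {z : V} (hz : z ≠ 0) : exp R.ΛV z ≠ 0 := by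
  rw [← rho_expUnit_val R]
  exact unit_apply_ne_zero _ hz

theorem cs_sq_le (R : Rep Λ V) (y : V) :
    ‖exp R.ΛV y‖ ^ 2 ≤ ‖exp R.ΛV (exp R.ΛV y)‖ * ‖y‖ := by
  set S : V →L[ℂ] V := exp R.ΛV with hSdef
  have hsymS : (↑S : V →ₗ[ℂ] V).IsSymmetric :=
    ContinuousLinearMap.isSelfAdjoint_iff_isSymmetric.1 (isSelfAdjoint_exp_LambdaV R)
  have key : (inner ℂ (S (S y)) y : ℂ) = inner ℂ (S y) (S y) := by
    have := hsymS (S y) y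
    simpa using this
  calc ‖S y‖ ^ 2 = ‖(inner ℂ (S y) (S y) : ℂ)‖ := by
        rw [inner_self_eq_norm_sq_to_K, norm_pow, RCLike.norm_ofReal,
          abs_of_nonneg (norm_nonneg _)]
    _ = ‖(inner ℂ (S (S y)) y : ℂ)‖ := by rw [key]
    _ ≤ ‖S (S y)‖ * ‖y‖ := norm_inner_le_norm _ _

theorem log_ratio_mono (R : Rep Λ V) {y : V} (hy : y ≠ 0) :
    Real.log ‖exp R.ΛV y‖ - Real.log ‖y‖
      ≤ Real.log ‖exp R.ΛV (exp R.ΛV y)‖ - Real.log ‖exp R.ΛV y‖ := by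
  set S : V →L[ℂ] V := exp R.ΛV
  have h0 : 0 < ‖y‖ := norm_pos_iff.2 hy
  have h1 : 0 < ‖S y‖ := norm_pos_iff.2 (expLV_ne_zero R hy)
  have h2 : 0 < ‖S (S y)‖ := norm_pos_iff.2 (expLV_ne_zero R (expLV_ne_zero R hy))
  have hcs := cs_sq_le R y
  have hlog := Real.log_le_log (by positivity) hcs
  rw [Real.log_pow, Real.log_mul h2.ne' h0.ne'] at hlog
  push_cast at hlog
  linarith

/-- The set of (real) eigenvalues of `Λ_V`. -/
def specSet (R : Rep Λ V) : Set ℝ := {c : ℝ | ∃ y : V, y ≠ 0 ∧ R.ΛV y = (c : ℂ) • y}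

theorem specSet_finite (R : Rep Λ V) : (specSet R).Finite := by
  have hsymΛ : (↑R.ΛV : V →ₗ[ℂ] V).IsSymmetric :=
    ContinuousLinearMap.isSelfAdjoint_iff_isSymmetric.1 R.selfAdjoint_ΛV
  set n := Module.finrank ℂ V with hn'
  have hn : Module.finrank ℂ V = n := rfl
  set b := hsymΛ.eigenvectorBasis hn with hbdef
  set μ := hsymΛ.eigenvalues hn with hμdef
  apply Set.Finite.subset (Set.finite_range μ)
  rintro c ⟨y, hy, hc⟩
  have hcoord : ∀ i, (μ i : ℂ) * b.repr y i = (c : ℂ) * b.repr y i := by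
    intro i
    have h1 := hsymΛ.eigenvectorBasis_apply_self_apply hn y i
    rw [show (↑R.ΛV : V →ₗ[ℂ] V) y = (c : ℂ) • y from hc, map_smul] at h1
    exact h1.symm
  have hex : ∃ i, b.repr y i ≠ 0 := by
    by_contra hcon
    push_neg at hcon
    apply hy
    have h0 : b.repr y = 0 := PiLp.ext hcon
    have h3 := congrArg b.repr.symm h0
    simpa using h3
  obtain ⟨i, hi⟩ := hex
  have : (μ i : ℂ) = (c : ℂ) := mul_right_cancel₀ hi (hcoord i)
  exact ⟨i, Complex.ofReal_injective this⟩
theorem rigidity (R : Rep Λ V) {y : V} (hy : y ≠ 0) {c : ℝ}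
    (h1 : ‖exp R.ΛV y‖ = Real.exp c * ‖y‖)
    (h2 : ‖exp R.ΛV (exp R.ΛV y)‖ = Real.exp c * ‖exp R.ΛV y‖) :
    R.ΛV y = (c : ℂ) • y := by
  have hsymΛ : (↑R.ΛV : V →ₗ[ℂ] V).IsSymmetric :=
    ContinuousLinearMap.isSelfAdjoint_iff_isSymmetric.1 R.selfAdjoint_ΛV
  have hsymS : (↑(exp R.ΛV) : V →ₗ[ℂ] V).IsSymmetric :=
    ContinuousLinearMap.isSelfAdjoint_iff_isSymmetric.1 (isSelfAdjoint_exp_LambdaV R)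
  have hn : Module.finrank ℂ V = Module.finrank ℂ V := rfl
  set n := Module.finrank ℂ V
  set b := hsymΛ.eigenvectorBasis hn with hbdef
  set μ := hsymΛ.eigenvalues hn with hμdef
  -- the diagonal action of `S = exp ΛV` in coordinates
  have hSb : ∀ i, exp R.ΛV (b i) = (Real.exp (μ i) : ℂ) • b i := by
    intro i
    have h0 : R.ΛV (b i) = ((μ i : ℝ) : ℂ) • b i := hsymΛ.apply_eigenvectorBasis hn i
    rw [exp_apply_eigenvector h0, ← Complex.ofReal_exp]
  have hrepS : ∀ (z : V) (i : Fin n),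
      b.repr (exp R.ΛV z) i = (Real.exp (μ i) : ℂ) * b.repr z i := by
    intro z i
    rw [b.repr_apply_apply, b.repr_apply_apply]
    have hsy := hsymS (b i) z
    simp only [ContinuousLinearMap.coe_coe] at hsy
    rw [← hsy, hSb i, inner_smul_left, Complex.conj_ofReal]
  -- squared-norm formulas
  have hnorm : ∀ z : V, ‖z‖ ^ 2 = ∑ i, ‖b.repr z i‖ ^ 2 := by
    intro z
    rw [← b.repr.norm_map z, EuclideanSpace.norm_eq,
      Real.sq_sqrt (Finset.sum_nonneg fun i _ => sq_nonneg _)]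
  set q : Fin n → ℝ := fun i => ‖b.repr y i‖ ^ 2 with hqdef
  set ee : Fin n → ℝ := fun i => (Real.exp (μ i)) ^ 2 with heedef
  have habs : ∀ (z : V) (i : Fin n),
      ‖b.repr (exp R.ΛV z) i‖ ^ 2 = ee i * ‖b.repr z i‖ ^ 2 := by
    intro z i
    rw [hrepS z i, norm_mul, mul_pow, Complex.norm_real, Real.norm_eq_abs,
      abs_of_pos (Real.exp_pos _)]
  have hN0 : ‖y‖ ^ 2 = ∑ i, q i := hnorm y
  have hN1 : ‖exp R.ΛV y‖ ^ 2 = ∑ i, ee i * q i := by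
    rw [hnorm]; exact Finset.sum_congr rfl fun i _ => habs y i
  have hN2 : ‖exp R.ΛV (exp R.ΛV y)‖ ^ 2 = ∑ i, ee i * (ee i * q i) := by
    rw [hnorm]
    refine Finset.sum_congr rfl fun i _ => ?_
    rw [habs _ i, habs y i]
  set c2 : ℝ := (Real.exp c) ^ 2 with hc2def
  have h1sq : ‖exp R.ΛV y‖ ^ 2 = c2 * ‖y‖ ^ 2 := by rw [h1]; ring
  have h2sq : ‖exp R.ΛV (exp R.ΛV y)‖ ^ 2 = c2 * ‖exp R.ΛV y‖ ^ 2 := by rw [h2]; ring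
  have hkey : ∑ i, (ee i - c2) ^ 2 * q i = 0 := by
    have hexpand : ∀ i : Fin n, (ee i - c2) ^ 2 * q i
        = ee i * (ee i * q i) - 2 * c2 * (ee i * q i) + c2 ^ 2 * q i := fun i => by ring
    calc ∑ i, (ee i - c2) ^ 2 * q i
        = ∑ i, (ee i * (ee i * q i)) - 2 * c2 * ∑ i, (ee i * q i) + c2 ^ 2 * ∑ i, q i := by
          rw [Finset.mul_sum, Finset.mul_sum, ← Finset.sum_sub_distrib,
            ← Finset.sum_add_distrib]
          exact Finset.sum_congr rfl fun i _ => hexpand i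
      _ = ‖exp R.ΛV (exp R.ΛV y)‖ ^ 2 - 2 * c2 * ‖exp R.ΛV y‖ ^ 2
            + c2 ^ 2 * ‖y‖ ^ 2 := by rw [hN0, hN1, hN2]
      _ = 0 := by rw [h2sq, h1sq]; ring
  have hterm : ∀ i ∈ Finset.univ, (ee i - c2) ^ 2 * q i = 0 := by
    rw [← Finset.sum_eq_zero_iff_of_nonneg fun i _ => mul_nonneg (sq_nonneg _) (sq_nonneg _)]
    exact hkey
  have hmu : ∀ i : Fin n, b.repr y i ≠ 0 → μ i = c := by
    intro i hi
    have hq : q i ≠ 0 := pow_ne_zero _ (norm_ne_zero_iff.2 hi)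
    have := hterm i (Finset.mem_univ i)
    have hee : ee i = c2 := by
      have h3 : (ee i - c2) ^ 2 = 0 := by
        rcases mul_eq_zero.1 this with h | h
        · exact h
        · exact absurd h hq
      have := pow_eq_zero_iff (n := 2) (by norm_num) |>.1 h3
      linarith
    have he1 : Real.exp (2 * μ i) = Real.exp (2 * c) := by
      have e1 : Real.exp (2 * μ i) = ee i := by
        rw [heedef, two_mul, Real.exp_add]; ring
      have e2 : Real.exp (2 * c) = c2 := by
        rw [hc2def, two_mul, Real.exp_add]; ring
      rw [e1, e2, hee]
    have := Real.exp_eq_exp.1 he1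
    linarith
  -- conclude via coordinates
  apply b.repr.injective
  ext i
  have hco := hsymΛ.eigenvectorBasis_apply_self_apply hn y i
  have hlhs : b.repr (R.ΛV y) i = (μ i : ℂ) * b.repr y i := hco
  have hrhs : b.repr ((c : ℂ) • y) i = (c : ℂ) * b.repr y i := by
    rw [map_smul]; rfl
  rw [hlhs, hrhs]
  by_cases hzero : b.repr y i = 0
  · rw [hzero, mul_zero, mul_zero]
  · rw [hmu i hzero]
theorem tendsto_comp_sm {α : Type*} {f : ℕ → α} {l : Filter α} (h : Tendsto f atTop l)
    {σ : ℕ → ℕ} (hσ : StrictMono σ) : Tendsto (fun j => f (σ j)) atTop l :=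
  h.comp hσ.tendsto_atTop

theorem exists_subseq_useq_tendsto (R : Rep Λ V) (A : ℕ → (E →L[ℂ] E)ˣ) {v : V} (hv : v ≠ 0)
    (t : ℕ → ℕ) :
    ∃ σ : ℕ → ℕ, StrictMono σ ∧ ∃ w : V, w ≠ 0 ∧ ‖w‖ = 1 ∧
      Tendsto (fun j => useq R A v (t (σ j))) atTop (𝓝 w) := by
  have hc : IsCompact (Metric.sphere (0 : V) 1) := isCompact_sphere 0 1
  have hmem : ∀ j : ℕ, useq R A v (t j) ∈ Metric.sphere (0 : V) 1 := by
    intro j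
    rw [mem_sphere_zero_iff_norm]
    exact norm_useq R A hv (t j)
  obtain ⟨w, hwmem, σ, hσ, hconv⟩ := hc.tendsto_subseq hmem
  rw [mem_sphere_zero_iff_norm] at hwmem
  exact ⟨σ, hσ, w, by rw [← norm_pos_iff, hwmem]; norm_num, hwmem, hconv⟩

theorem norm_inv_rho_apply (R : Rep Λ V) {h : (E →L[ℂ] E)ˣ}
    (hu : (h : E →L[ℂ] E) ∈ unitary (E →L[ℂ] E)) (w : V) :
    ‖(((R.ρ h)⁻¹ : (V →L[ℂ] V)ˣ) : V →L[ℂ] V) w‖ = ‖w‖ :=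
  ContinuousLinearMap.norm_map_of_mem_unitary (val_inv_unitary R hu) w

theorem no_drop (R : Rep Λ V) (A : ℕ → (E →L[ℂ] E)ˣ) {v : V} (hv : v ≠ 0)
    (hstar : CondStar A Λ) {ε : ℝ} (hε : 0 < ε) :
    ∀ᶠ i in atTop, aseq R A v i - ε ≤ aseq R A v (i + 1) := by
  by_contra hcon
  rw [Filter.not_eventually] at hcon
  obtain ⟨θ, hθ, hP⟩ := extraction_of_frequently_atTop hcon
  obtain ⟨ψ, hψ, g, hg, hB1, hB2⟩ := hstar θ hθ
  obtain ⟨σ, hσ, w, hw0, hw1, huw⟩ := exists_subseq_useq_tendsto R A hv (fun j => θ (ψ j))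
  have hB1' : Tendsto (fun j => (Bseq A (θ (ψ (σ j)) + 1) : E →L[ℂ] E)) atTop
      (𝓝 ((g * expUnit Λ * g⁻¹ : (E →L[ℂ] E)ˣ) : E →L[ℂ] E)) := tendsto_comp_sm hB1 hσ
  have hB2' : Tendsto (fun j => (Bseq A (θ (ψ (σ j)) + 2) : E →L[ℂ] E)) atTop
      (𝓝 ((g * expUnit Λ * g⁻¹ : (E →L[ℂ] E)ˣ) : E →L[ℂ] E)) := tendsto_comp_sm hB2 hσ
  obtain ⟨l0, l1⟩ := scen_limits (t := fun j => θ (ψ (σ j))) R A hv hg hB1' hB2' hw0 huw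
  set w' := (((R.ρ g)⁻¹ : (V →L[ℂ] V)ˣ) : V →L[ℂ] V) w with hw'def
  have hw'0 : w' ≠ 0 := unit_apply_ne_zero _ hw0
  have hlogw' : Real.log ‖w'‖ = 0 := by
    rw [hw'def, norm_inv_rho_apply R hg, hw1, Real.log_one]
  have hmono := log_ratio_mono R hw'0
  rw [hlogw', sub_zero] at hmono
  have hle : ∀ j, aseq R A v (θ (ψ (σ j)) + 1) ≤ aseq R A v (θ (ψ (σ j))) - ε := by
    intro j
    exact (lt_of_not_ge (hP (ψ (σ j)))).le
  have hlim := le_of_tendsto_of_tendsto' l1 (l0.sub_const ε) hle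
  linarith

theorem aseq_bounded (R : Rep Λ V) (A : ℕ → (E →L[ℂ] E)ˣ) {v : V} (hv : v ≠ 0)
    (hstar : CondStar A Λ) :
    ∃ C : ℝ, ∀ᶠ i in atTop, |aseq R A v i| ≤ C := by
  by_contra hcon
  push_neg at hcon
  have hfreq : ∀ n : ℕ, ∃ᶠ k in atTop, (n : ℝ) < |aseq R A v k| := by
    intro n
    have h1 := hcon n
    exact h1
  obtain ⟨θ, hθ, hP⟩ := extraction_forall_of_frequently hfreq
  obtain ⟨ψ, hψ, g, hg, hB1, hB2⟩ := hstar θ hθ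
  obtain ⟨σ, hσ, w, hw0, hw1, huw⟩ := exists_subseq_useq_tendsto R A hv (fun j => θ (ψ j))
  have hB1' : Tendsto (fun j => (Bseq A (θ (ψ (σ j)) + 1) : E →L[ℂ] E)) atTop
      (𝓝 ((g * expUnit Λ * g⁻¹ : (E →L[ℂ] E)ˣ) : E →L[ℂ] E)) := tendsto_comp_sm hB1 hσ
  have hB2' : Tendsto (fun j => (Bseq A (θ (ψ (σ j)) + 2) : E →L[ℂ] E)) atTop
      (𝓝 ((g * expUnit Λ * g⁻¹ : (E →L[ℂ] E)ˣ) : E →L[ℂ] E)) := tendsto_comp_sm hB2 hσ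
  obtain ⟨l0, -⟩ := scen_limits (t := fun j => θ (ψ (σ j))) R A hv hg hB1' hB2' hw0 huw
  have hgrow : ∀ j : ℕ, (j : ℝ) ≤ |aseq R A v (θ (ψ (σ j)))| := by
    intro j
    have h1 := hP (ψ (σ j))
    have h2 : (j : ℝ) ≤ (ψ (σ j) : ℝ) := by
      exact_mod_cast le_trans (hσ.le_apply) (hψ.le_apply)
    exact le_trans h2 h1.le
  have htop : Tendsto (fun j => |aseq R A v (θ (ψ (σ j)))|) atTop atTop :=
    tendsto_atTop_mono hgrow tendsto_natCast_atTop_atTop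
  exact not_tendsto_atTop_of_tendsto_nhds l0.abs htop
theorem freq_near_of_limpt {a : ℕ → ℝ} {c : ℝ}
    (h : ∃ θ : ℕ → ℕ, StrictMono θ ∧ Tendsto (fun j => a (θ j)) atTop (𝓝 c))
    {δ : ℝ} (hδ : 0 < δ) : ∀ N : ℕ, ∃ i, N < i ∧ |a i - c| < δ := by
  obtain ⟨θ, hθ, hconv⟩ := h
  intro N
  obtain ⟨j₀, hj₀⟩ := Metric.tendsto_atTop.1 hconv δ hδ
  refine ⟨θ (max (N + 1) j₀), ?_, ?_⟩
  · calc N < N + 1 := Nat.lt_succ_self N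
      _ ≤ max (N + 1) j₀ := le_max_left _ _
      _ ≤ θ (max (N + 1) j₀) := hθ.le_apply
  · have h2 := hj₀ (max (N + 1) j₀) (le_max_right _ _)
    rwa [Real.dist_eq] at h2

theorem two_limpt_false (R : Rep Λ V) (A : ℕ → (E →L[ℂ] E)ˣ) {v : V} (hv : v ≠ 0)
    (hstar : CondStar A Λ) {l D : ℝ} (hlD : l < D)
    (hl : ∃ θ : ℕ → ℕ, StrictMono θ ∧ Tendsto (fun j => aseq R A v (θ j)) atTop (𝓝 l))
    (hD : ∃ θ : ℕ → ℕ, StrictMono θ ∧ Tendsto (fun j => aseq R A v (θ j)) atTop (𝓝 D)) :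
    False := by
  classical
  set a := aseq R A v with hadef
  -- choose the level c* in a spectral gap strictly between l and D
  set F : Finset ℝ := insert l (specSet_finite R).toFinset with hFdef
  set F' : Finset ℝ := F.filter (· < D) with hF'def
  have hlF' : l ∈ F' := by
    rw [hF'def, Finset.mem_filter]
    exact ⟨by simp [hFdef], hlD⟩
  have hne : F'.Nonempty := ⟨l, hlF'⟩
  set p : ℝ := F'.max' hne with hpdef
  have hpD : p < D := (Finset.mem_filter.1 (F'.max'_mem hne)).2
  have hlp : l ≤ p := F'.le_max' l hlF'
  set η : ℝ := (D - p) / 8 with hηdef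
  have hη : 0 < η := by rw [hηdef]; linarith
  set cs : ℝ := p + 4 * η with hcsdef
  have hcs_spec : cs ∉ specSet R := by
    intro hmem
    have h1 : cs ∈ F' := by
      rw [hF'def, Finset.mem_filter]
      refine ⟨by simp [hFdef, hmem], by rw [hcsdef, hηdef]; linarith⟩
    have := F'.le_max' cs h1
    rw [← hpdef] at this
    rw [hcsdef] at this
    linarith
  -- frequent visits above and below
  have hAbove : ∀ N : ℕ, ∃ s : ℕ, N < s ∧ cs + 2 * η < a s := by
    intro N
    obtain ⟨i, hi1, hi2⟩ := freq_near_of_limpt hD hη N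
    refine ⟨i, hi1, ?_⟩
    rw [abs_lt] at hi2
    rw [hcsdef, hηdef]
    rw [hηdef] at hi2
    linarith [hi2.1]
  have hBelow : ∀ N : ℕ, ∃ T : ℕ, N < T ∧ a T < cs - 2 * η := by
    intro N
    obtain ⟨i, hi1, hi2⟩ := freq_near_of_limpt hl hη N
    refine ⟨i, hi1, ?_⟩
    rw [abs_lt] at hi2
    rw [hcsdef, hηdef]
    rw [hηdef] at hi2
    linarith [hi2.2, hlp]
  choose sfn hsfn1 hsfn2 using hAbove
  choose Tfn hTfn1 hTfn2 using hBelow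
  -- descent windows
  set ST : ℕ → ℕ × ℕ := fun k =>
    Nat.rec (sfn 0, Tfn (sfn 0)) (fun _ p => (sfn p.2, Tfn (sfn p.2))) k with hSTdef
  set s : ℕ → ℕ := fun k => (ST k).1 with hsdef
  set T : ℕ → ℕ := fun k => (ST k).2 with hTdef
  have hTfromS : ∀ k, T k = Tfn (s k) := by
    intro k
    cases k <;> rfl
  have hsfromT : ∀ k, s (k + 1) = sfn (T k) := fun k => rfl
  have hsT : ∀ k, s k < T k := fun k => by rw [hTfromS k]; exact hTfn1 (s k)
  have ha_s : ∀ k, cs + 2 * η < a (s k) := by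
    intro k
    cases k with
    | zero => exact hsfn2 0
    | succ m => exact hsfn2 (T m)
  have ha_T : ∀ k, a (T k) < cs - 2 * η := fun k => by rw [hTfromS k]; exact hTfn2 (s k)
  have hTs : ∀ k, T k < s (k + 1) := fun k => by rw [hsfromT k]; exact hsfn1 (T k)
  -- last time ≥ cs within each window
  set P : ℕ → Prop := fun u => cs ≤ a u with hPdef
  set tk : ℕ → ℕ := fun k => Nat.findGreatest P (T k) with htkdef
  have hPs : ∀ k, P (s k) := fun k => by
    have := ha_s k
    show cs ≤ a (s k)
    linarith [hη]
  have htk_ge : ∀ k, s k ≤ tk k := fun k => Nat.le_findGreatest (hsT k).le (hPs k)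
  have htk_le : ∀ k, tk k ≤ T k := fun k => Nat.findGreatest_le (T k)
  have htkP : ∀ k, P (tk k) := fun k => Nat.findGreatest_spec (hsT k).le (hPs k)
  have htk_lt : ∀ k, tk k < T k := by
    intro k
    rcases lt_or_eq_of_le (htk_le k) with h | h
    · exact h
    · exfalso
      have h4 : cs ≤ a (T k) := by rw [← h]; exact htkP k
      have h2 := ha_T k
      linarith [hη]
  have hmax : ∀ k u, tk k < u → u ≤ T k → a u < cs := by
    intro k u h1 h2
    have h3 := Nat.findGreatest_is_greatest (P := P) h1 h2
    exact lt_of_not_ge fun hh => h3 hh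
  have htkSM : StrictMono tk := strictMono_nat_of_lt_succ fun k => by
    calc tk k ≤ T k := htk_le k
      _ < s (k + 1) := hTs k
      _ ≤ tk (k + 1) := htk_ge (k + 1)
  -- a (tk k) → cs
  have hconv_tk : Tendsto (fun k => a (tk k)) atTop (𝓝 cs) := by
    rw [Metric.tendsto_atTop]
    intro ε hε
    obtain ⟨N1, hN1⟩ := eventually_atTop.1 (no_drop R A hv hstar (half_pos hε))
    refine ⟨N1, fun k hk => ?_⟩
    have hik : N1 ≤ tk k := le_trans hk (le_trans htkSM.le_apply le_rfl)
    have hlow : cs ≤ a (tk k) := htkP k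
    have hnext : a (tk k + 1) < cs := hmax k (tk k + 1) (Nat.lt_succ_self _) (htk_lt k)
    have hdrop := hN1 (tk k) hik
    rw [Real.dist_eq, abs_lt]
    constructor <;> [linarith; linarith]
  -- scenario extraction at the times tk
  obtain ⟨ψ, hψ, g, hg, hB1, hB2⟩ := hstar tk htkSM
  obtain ⟨σ, hσ, w, hw0, hw1, huw⟩ := exists_subseq_useq_tendsto R A hv (fun j => tk (ψ j))
  have hB1' : Tendsto (fun j => (Bseq A (tk (ψ (σ j)) + 1) : E →L[ℂ] E)) atTop
      (𝓝 ((g * expUnit Λ * g⁻¹ : (E →L[ℂ] E)ˣ) : E →L[ℂ] E)) := tendsto_comp_sm hB1 hσ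
  have hB2' : Tendsto (fun j => (Bseq A (tk (ψ (σ j)) + 2) : E →L[ℂ] E)) atTop
      (𝓝 ((g * expUnit Λ * g⁻¹ : (E →L[ℂ] E)ˣ) : E →L[ℂ] E)) := tendsto_comp_sm hB2 hσ
  obtain ⟨l0, l1⟩ := scen_limits (t := fun j => tk (ψ (σ j))) R A hv hg hB1' hB2' hw0 huw
  set w' := (((R.ρ g)⁻¹ : (V →L[ℂ] V)ˣ) : V →L[ℂ] V) w with hw'def
  have hw'0 : w' ≠ 0 := unit_apply_ne_zero _ hw0
  have hnw' : ‖w'‖ = 1 := by rw [hw'def, norm_inv_rho_apply R hg, hw1]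
  -- identify limits
  have hc0 : Real.log ‖exp R.ΛV w'‖ = cs :=
    tendsto_nhds_unique l0 (tendsto_comp_sm (tendsto_comp_sm hconv_tk hψ) hσ)
  have hup : Real.log ‖exp R.ΛV (exp R.ΛV w')‖ - Real.log ‖exp R.ΛV w'‖ ≤ cs := by
    refine le_of_tendsto_of_tendsto' l1 (tendsto_const_nhds) fun j => ?_
    exact (hmax (ψ (σ j)) (tk (ψ (σ j)) + 1) (Nat.lt_succ_self _) (htk_lt (ψ (σ j)))).le
  have hlogw' : Real.log ‖w'‖ = 0 := by rw [hnw', Real.log_one]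
  have hmono := log_ratio_mono R hw'0
  rw [hlogw', sub_zero] at hmono
  have hL1 : Real.log ‖exp R.ΛV (exp R.ΛV w')‖ - Real.log ‖exp R.ΛV w'‖ = cs :=
    le_antisymm hup (by rw [← hc0]; exact hmono)
  -- rigidity
  have hpos1 : 0 < ‖exp R.ΛV w'‖ := norm_pos_iff.2 (expLV_ne_zero R hw'0)
  have hpos2 : 0 < ‖exp R.ΛV (exp R.ΛV w')‖ :=
    norm_pos_iff.2 (expLV_ne_zero R (expLV_ne_zero R hw'0))
  have h1 : ‖exp R.ΛV w'‖ = Real.exp cs * ‖w'‖ := by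
    rw [hnw', mul_one, ← hc0, Real.exp_log hpos1]
  have h2 : ‖exp R.ΛV (exp R.ΛV w')‖ = Real.exp cs * ‖exp R.ΛV w'‖ := by
    have := congrArg Real.exp hL1
    rw [Real.exp_sub, Real.exp_log hpos1, Real.exp_log hpos2] at this
    field_simp at this
    linarith [this]
  have hrig := rigidity R hw'0 h1 h2
  exact hcs_spec ⟨w', hw'0, hrig⟩
theorem increments_tendsto (R : Rep Λ V) (A : ℕ → (E →L[ℂ] E)ˣ) {v : V} (hv : v ≠ 0)
    (hstar : CondStar A Λ) {d : ℝ}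
    (hd : Tendsto (fun i : ℕ => fseq R A v i / i) atTop (𝓝 d)) :
    Tendsto (aseq R A v) atTop (𝓝 d) := by
  set a := aseq R A v with hadef
  obtain ⟨C, hC⟩ := aseq_bounded R A hv hstar
  obtain ⟨N₀, hN₀⟩ := eventually_atTop.1 hC
  have hcpt : IsCompact (Set.Icc (-C) C) := isCompact_Icc
  -- one limit point exists
  have hmem0 : ∀ j : ℕ, a (j + N₀) ∈ Set.Icc (-C) C := by
    intro j
    have := hN₀ (j + N₀) (Nat.le_add_left N₀ j)
    rw [abs_le] at this
    exact ⟨this.1, this.2⟩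
  obtain ⟨c₀, -, θ₀, hθ₀, hconv₀⟩ := hcpt.tendsto_subseq hmem0
  have hlim₀ : ∃ θ : ℕ → ℕ, StrictMono θ ∧ Tendsto (fun j => a (θ j)) atTop (𝓝 c₀) :=
    ⟨fun j => θ₀ j + N₀, fun m n hmn => by
      show θ₀ m + N₀ < θ₀ n + N₀
      have := hθ₀ hmn
      omega, hconv₀⟩
  -- any limit point equals c₀
  have huniq : ∀ c : ℝ, (∃ θ : ℕ → ℕ, StrictMono θ ∧
      Tendsto (fun j => a (θ j)) atTop (𝓝 c)) → c = c₀ := by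
    intro c hc
    rcases lt_trichotomy c c₀ with h | h | h
    · exact absurd (two_limpt_false R A hv hstar h hc hlim₀) not_false
    · exact h
    · exact absurd (two_limpt_false R A hv hstar h hlim₀ hc) not_false
  -- hence a converges to c₀
  have hconv : Tendsto a atTop (𝓝 c₀) := by
    by_contra hcon
    rw [Metric.tendsto_atTop] at hcon
    push_neg at hcon
    obtain ⟨ε, hε, hfr⟩ := hcon
    have hfreq : ∀ N : ℕ, ∃ n > N, ε ≤ dist (a n) c₀ := by
      intro N
      obtain ⟨n, hn1, hn2⟩ := hfr (N + 1)
      exact ⟨n, by omega, hn2⟩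
    obtain ⟨θ, hθ, hP⟩ := Nat.exists_strictMono_subsequence hfreq
    have hmem : ∀ j : ℕ, a (θ (j + N₀)) ∈ Set.Icc (-C) C := by
      intro j
      have h1 : N₀ ≤ θ (j + N₀) := le_trans (Nat.le_add_left N₀ j) hθ.le_apply
      have := hN₀ _ h1
      rw [abs_le] at this
      exact ⟨this.1, this.2⟩
    obtain ⟨c₁, -, σ, hσ, hconv₁⟩ := hcpt.tendsto_subseq hmem
    have hc₁ : c₁ = c₀ := by
      apply huniq
      refine ⟨fun j => θ (σ j + N₀), fun m n hmn => ?_, hconv₁⟩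
      show θ (σ m + N₀) < θ (σ n + N₀)
      have := hσ hmn
      exact hθ (by omega)
    have hdist : ε ≤ dist c₁ c₀ := by
      have hge : ∀ j : ℕ, ε ≤ dist (a (θ (σ j + N₀))) c₀ := fun j => hP (σ j + N₀)
      have hdtend : Tendsto (fun j => dist (a (θ (σ j + N₀))) c₀) atTop
          (𝓝 (dist c₁ c₀)) := (hconv₁.dist tendsto_const_nhds)
      exact ge_of_tendsto hdtend (Filter.Eventually.of_forall hge)
    rw [hc₁, dist_self] at hdist
    linarith
  -- Cesàro: c₀ = d
  have hces := hconv.cesaro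
  have htel : ∀ n : ℕ, ∑ i ∈ Finset.range n, a i = fseq R A v n - fseq R A v 0 :=
    fun n => Finset.sum_range_sub (fseq R A v) n
  have hces' : Tendsto (fun n : ℕ => (fseq R A v n - fseq R A v 0) / n) atTop (𝓝 c₀) := by
    have : (fun n : ℕ => (n : ℝ)⁻¹ * ∑ i ∈ Finset.range n, a i)
        = fun n : ℕ => (fseq R A v n - fseq R A v 0) / n := by
      funext n
      rw [htel n, inv_mul_eq_div]
    rwa [this] at hces
  have hzero : Tendsto (fun n : ℕ => fseq R A v 0 / n) atTop (𝓝 0) :=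
    tendsto_const_div_atTop_nhds_zero_nat _
  have hd' : Tendsto (fun n : ℕ => fseq R A v n / n) atTop (𝓝 c₀) := by
    have := hces'.add hzero
    rw [add_zero] at this
    have heq : (fun n : ℕ => (fseq R A v n - fseq R A v 0) / n + fseq R A v 0 / n)
        = fun n : ℕ => fseq R A v n / n := by
      funext n
      ring
    rwa [heq] at this
  have : d = c₀ := tendsto_nhds_unique hd hd'
  rwa [← this] at hconv

/-- Lemma 2.3. Assume condition (*), let `v ≠ 0` with weight `d(v) = d` and
let `U` be the eigenspace of `Λ_V` with eigenvalue `d`. Given a subsequence `(α)` with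
`B_{α+1} → g e^Λ g⁻¹`, after passing to a further subsequence, `[ρ(A_α) v]` converges in
`ℙ(V)` to a point `[w]` with `ρ(g)⁻¹ w ∈ U`. -/
theorem limit_in_eigenspace (Λ : E →L[ℂ] E) (hΛ : IsSelfAdjoint Λ)
    (A : ℕ → (E →L[ℂ] E)ˣ) (hA0 : A 0 = 1) (hstar : CondStar A Λ)
    (R : Rep Λ V) (v : V) (hv : v ≠ 0) (d : ℝ)
    (hd : Tendsto (fun i : ℕ => fseq R A v i / i) atTop (𝓝 d))
    (φ : ℕ → ℕ) (hφ : StrictMono φ) (g : (E →L[ℂ] E)ˣ)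
    (hg : (g : E →L[ℂ] E) ∈ unitary (E →L[ℂ] E))
    (hconv : Tendsto (fun j => (Bseq A (φ j + 1) : E →L[ℂ] E)) atTop
      (𝓝 ((g * expUnit Λ * g⁻¹ : (E →L[ℂ] E)ˣ) : E →L[ℂ] E))) :
    ∃ ψ : ℕ → ℕ, StrictMono ψ ∧ ∃ (w : V) (hw : w ≠ 0),
      (((R.ρ g)⁻¹ : (V →L[ℂ] V)ˣ) : V →L[ℂ] V) w ∈
        Module.End.eigenspace (R.ΛV : V →ₗ[ℂ] V) (d : ℂ) ∧
      Tendsto (fun j => Projectivization.mk ℂ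
          ((R.ρ (A (φ (ψ j))) : V →L[ℂ] V) v) (unit_apply_ne_zero _ hv))
        atTop (𝓝 (Projectivization.mk ℂ w hw)) := by

  have hainc := increments_tendsto R A hv hstar hd
  obtain ⟨ψ₁, hψ₁, g₂, hg₂, hB1₂, hB2₂⟩ := hstar φ hφ
  have hval : ((g₂ * expUnit Λ * g₂⁻¹ : (E →L[ℂ] E)ˣ) : E →L[ℂ] E)
      = ((g * expUnit Λ * g⁻¹ : (E →L[ℂ] E)ˣ) : E →L[ℂ] E) :=
    tendsto_nhds_unique hB1₂ (tendsto_comp_sm hconv hψ₁)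
  rw [hval] at hB1₂ hB2₂
  obtain ⟨σ, hσ, w, hw0, hw1, huw⟩ := exists_subseq_useq_tendsto R A hv (fun j => φ (ψ₁ j))
  have hB1' : Tendsto (fun j => (Bseq A (φ (ψ₁ (σ j)) + 1) : E →L[ℂ] E)) atTop
      (𝓝 ((g * expUnit Λ * g⁻¹ : (E →L[ℂ] E)ˣ) : E →L[ℂ] E)) := tendsto_comp_sm hB1₂ hσ
  have hB2' : Tendsto (fun j => (Bseq A (φ (ψ₁ (σ j)) + 2) : E →L[ℂ] E)) atTop
      (𝓝 ((g * expUnit Λ * g⁻¹ : (E →L[ℂ] E)ˣ) : E →L[ℂ] E)) := tendsto_comp_sm hB2₂ hσ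
  obtain ⟨l0, l1⟩ := scen_limits (t := fun j => φ (ψ₁ (σ j))) R A hv hg hB1' hB2' hw0 huw
  set w' := (((R.ρ g)⁻¹ : (V →L[ℂ] V)ˣ) : V →L[ℂ] V) w with hw'def
  have hw'0 : w' ≠ 0 := unit_apply_ne_zero _ hw0
  have hnw' : ‖w'‖ = 1 := by rw [hw'def, norm_inv_rho_apply R hg, hw1]
  have hSMt : StrictMono (fun j => φ (ψ₁ (σ j))) := (hφ.comp hψ₁).comp hσ
  have hSMt1 : StrictMono (fun j => φ (ψ₁ (σ j)) + 1) := fun m n hmn =>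
    Nat.add_lt_add_right (hSMt hmn) 1
  have hc0 : Real.log ‖exp R.ΛV w'‖ = d :=
    tendsto_nhds_unique l0 (tendsto_comp_sm hainc hSMt)
  have hc1 : Real.log ‖exp R.ΛV (exp R.ΛV w')‖ - Real.log ‖exp R.ΛV w'‖ = d :=
    tendsto_nhds_unique l1 (tendsto_comp_sm hainc hSMt1)
  have hpos1 : 0 < ‖exp R.ΛV w'‖ := norm_pos_iff.2 (expLV_ne_zero R hw'0)
  have hpos2 : 0 < ‖exp R.ΛV (exp R.ΛV w')‖ :=
    norm_pos_iff.2 (expLV_ne_zero R (expLV_ne_zero R hw'0))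
  have h1 : ‖exp R.ΛV w'‖ = Real.exp d * ‖w'‖ := by
    rw [hnw', mul_one, ← hc0, Real.exp_log hpos1]
  have h2 : ‖exp R.ΛV (exp R.ΛV w')‖ = Real.exp d * ‖exp R.ΛV w'‖ := by
    have h3 := congrArg Real.exp hc1
    rw [Real.exp_sub, Real.exp_log hpos1, Real.exp_log hpos2] at h3
    field_simp at h3
    linarith [h3]
  have hrig := rigidity R hw'0 h1 h2
  refine ⟨fun j => ψ₁ (σ j), hψ₁.comp hσ, w, hw0, ?_, ?_⟩
  · rw [Module.End.mem_eigenspace_iff]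
    exact hrig
  · -- projective convergence
    have hune : ∀ j : ℕ, useq R A v (φ (ψ₁ (σ j))) ≠ 0 := by
      intro j
      have := norm_useq R A hv (φ (ψ₁ (σ j)))
      intro hz
      rw [hz, norm_zero] at this
      norm_num at this
    have hsub : Tendsto (fun j => (⟨useq R A v (φ (ψ₁ (σ j))), hune j⟩ : {x : V // x ≠ 0}))
        atTop (𝓝 (⟨w, hw0⟩ : {x : V // x ≠ 0})) := tendsto_subtype_rng.2 huw
    have hq : Tendsto (fun j => Projectivization.mk ℂ (useq R A v (φ (ψ₁ (σ j)))) (hune j))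
        atTop (𝓝 (Projectivization.mk ℂ w hw0)) :=
      ((continuous_quotient_mk').tendsto _).comp hsub
    have hmkeq : ∀ j, Projectivization.mk ℂ
        ((R.ρ (A (φ (ψ₁ (σ j)))) : V →L[ℂ] V) v) (unit_apply_ne_zero _ hv)
        = Projectivization.mk ℂ (useq R A v (φ (ψ₁ (σ j)))) (hune j) := by
      intro j
      rw [Projectivization.mk_eq_mk_iff']
      refine ⟨((‖xseq R A v (φ (ψ₁ (σ j)))‖ : ℂ)), ?_⟩
      rw [useq, smul_smul, mul_inv_cancel₀, one_smul]
      · rfl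
      · exact_mod_cast (norm_xseq_pos R A hv _).ne'
    simpa only [hmkeq] using hq

end CSW
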